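/- Let A be a complex normed algebra that is faithful and has no identity element, let a ∈ A, and let λ ∈ ℂ. Then {F(L_a + λ·id_A) : F a continuous linear functional on B(A) with ‖F‖ = 1 and F(id_A) = 1} is contained in {f((a, λ)) : f a continuous linear functional on A_e^1 with ‖f‖ = 1 and f((0, 1)) = 1}, where A_e^1 is the unitization A × ℂ with the ℓ¹-norm ‖(b, μ)‖ = ‖b‖ + |μ|. -/
import Mathlib


/-- The unitization `A_e = A × ℂ` endowed with the ℓ¹-norm `‖(b, μ)‖₁ = ‖b‖ + |μ|`,
realized as `WithLp 1 (A × ℂ)`; its identity element is `(0, 1)`. -/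
noncomputable abbrev unitizationL1 (A : Type*) [NonUnitalNormedRing A] [NormedSpace ℂ A] :=
  WithLp 1 (A × ℂ)

/-- Auxiliary linear map: pull back a functional on `B(A)` along `(b, μ) ↦ L_b + μ • id`. -/
noncomputable def auxLin {A : Type*} [NonUnitalNormedRing A] [NormedSpace ℂ A]
    [SMulCommClass ℂ A A] [IsScalarTower ℂ A A]
    (F : (A →L[ℂ] A) →L[ℂ] ℂ) : unitizationL1 A →ₗ[ℂ] ℂ where
  toFun x := F (ContinuousLinearMap.mul ℂ A x.fst + x.snd • ContinuousLinearMap.id ℂ A)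
  map_add' x y := by
    show F (ContinuousLinearMap.mul ℂ A (x.fst + y.fst)
        + (x.snd + y.snd) • ContinuousLinearMap.id ℂ A) = F _ + F _
    rw [← map_add]
    congr 1
    rw [map_add, add_smul]
    abel
  map_smul' c x := by
    show F (ContinuousLinearMap.mul ℂ A (c • x.fst)
        + (c * x.snd) • ContinuousLinearMap.id ℂ A) = c • F _
    rw [← map_smul]
    congr 1
    rw [map_smul, smul_add, smul_smul]

@[simp] theorem auxLin_apply {A : Type*} [NonUnitalNormedRing A] [NormedSpace ℂ A]
    [SMulCommClass ℂ A A] [IsScalarTower ℂ A A]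
    (F : (A →L[ℂ] A) →L[ℂ] ℂ) (x : unitizationL1 A) :
    auxLin F x = F (ContinuousLinearMap.mul ℂ A x.fst + x.snd • ContinuousLinearMap.id ℂ A) :=
  rfl

set_option maxHeartbeats 1000000 in
theorem stmt18 {A : Type*} [NonUnitalNormedRing A] [NormedSpace ℂ A]
    [SMulCommClass ℂ A A] [IsScalarTower ℂ A A]
    (hfaithful : ∀ b : A, (∀ x : A, b * x = 0) → b = 0)
    (hnoid : ¬ ∃ e : A, ∀ x : A, e * x = x ∧ x * e = x)
    (a : A) (lam : ℂ) :
    {z : ℂ | ∃ F : (A →L[ℂ] A) →L[ℂ] ℂ, ‖F‖ = 1 ∧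
        F (ContinuousLinearMap.id ℂ A) = 1 ∧
        F (ContinuousLinearMap.mul ℂ A a + lam • ContinuousLinearMap.id ℂ A) = z} ⊆
      {z : ℂ | ∃ f : unitizationL1 A →L[ℂ] ℂ, ‖f‖ = 1 ∧
        f ((WithLp.equiv 1 (A × ℂ)).symm (0, 1)) = 1 ∧
        f ((WithLp.equiv 1 (A × ℂ)).symm (a, lam)) = z} := by
  intro z hz
  obtain ⟨F, hF1, hFid, hFz⟩ := hz
  have hnorm : ∀ x : WithLp 1 (A × ℂ), ‖x‖ = ‖x.fst‖ + ‖x.snd‖ := by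
    intro x
    have h1 : (0:ℝ) < (1 : ENNReal).toReal := by norm_num
    rw [WithLp.prod_norm_eq_add h1]
    norm_num
  have hbound : ∀ x : unitizationL1 A, ‖auxLin F x‖ ≤ 1 * ‖x‖ := by
    intro x
    have h1 : ‖ContinuousLinearMap.mul ℂ A x.fst‖ ≤ ‖x.fst‖ :=
      ContinuousLinearMap.opNorm_mul_apply_le ℂ A x.fst
    have h2 : ‖x.snd • ContinuousLinearMap.id ℂ A‖ ≤ ‖x.snd‖ := by
      calc ‖x.snd • ContinuousLinearMap.id ℂ A‖ ≤ ‖x.snd‖ * ‖ContinuousLinearMap.id ℂ A‖ :=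
            ContinuousLinearMap.opNorm_smul_le _ _
        _ ≤ ‖x.snd‖ * 1 :=
            mul_le_mul_of_nonneg_left ContinuousLinearMap.norm_id_le (norm_nonneg _)
        _ = ‖x.snd‖ := mul_one _
    rw [auxLin_apply]
    calc ‖F (ContinuousLinearMap.mul ℂ A x.fst + x.snd • ContinuousLinearMap.id ℂ A)‖
        ≤ ‖F‖ * ‖ContinuousLinearMap.mul ℂ A x.fst + x.snd • ContinuousLinearMap.id ℂ A‖ :=
          F.le_opNorm _
      _ ≤ 1 * (‖ContinuousLinearMap.mul ℂ A x.fst‖ + ‖x.snd • ContinuousLinearMap.id ℂ A‖) := by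
          rw [hF1]; exact mul_le_mul_of_nonneg_left (norm_add_le _ _) zero_le_one
      _ ≤ 1 * (‖x.fst‖ + ‖x.snd‖) := by
          rw [one_mul, one_mul]; exact add_le_add h1 h2
      _ = 1 * ‖x‖ := by rw [hnorm x]
  set f : unitizationL1 A →L[ℂ] ℂ := (auxLin F).mkContinuous 1 hbound with hf
  have hfapp : ∀ x : unitizationL1 A, f x = auxLin F x := fun x => rfl
  have hf01 : f ((WithLp.equiv 1 (A × ℂ)).symm (0, 1)) = 1 := by
    rw [hfapp, auxLin_apply]
    show F (ContinuousLinearMap.mul ℂ A 0 + (1 : ℂ) • ContinuousLinearMap.id ℂ A) = 1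
    rw [map_zero, one_smul, zero_add, hFid]
  refine ⟨f, ?_, hf01, ?_⟩
  · refine le_antisymm (f.opNorm_le_bound zero_le_one (by simpa [hfapp] using hbound)) ?_
    have h := f.le_opNorm ((WithLp.equiv 1 (A × ℂ)).symm (0, 1))
    rw [hf01] at h
    have hn : ‖(WithLp.equiv 1 (A × ℂ)).symm ((0 : A), (1 : ℂ))‖ = 1 := by
      rw [hnorm]; simp
    rw [hn, mul_one] at h
    simpa using h
  · rw [hfapp, auxLin_apply]
    show F (ContinuousLinearMap.mul ℂ A a + lam • ContinuousLinearMap.id ℂ A) = z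
    exact hFz
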